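/- Let q > 2 and define F : (0, π/2] → ℝ by F(α) = (sin α)^{1-q} [ ∫_{-cot α}^{tan(α/2)} ( (z²+1)^{-q} + ((z sin α + cos α)/(z²+1))^q ) dz + ∫_{cot α}^{cot(α/2)} ( (z²+1)^{-q} + ((z sin α - cos α)/(z²+1))^q ) dz ]. Then F is strictly monotone decreasing on (0, π/2] and attains its global minimum at α = π/2. -/

import Mathlib

set_option maxHeartbeats 1000000

open MeasureTheory Set Real

/-- The angle function `F(α)` of the renormalized tangent-point energy. -/
noncomputable def Ffun (q α : ℝ) : ℝ :=
  sin α ^ (1 - q) *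
    ((∫ z in (-cot α)..(tan (α / 2)),
        ((z ^ 2 + 1) ^ (-q) + ((z * sin α + cos α) / (z ^ 2 + 1)) ^ q)) +
      (∫ z in (cot α)..(cot (α / 2)),
        ((z ^ 2 + 1) ^ (-q) + ((z * sin α - cos α) / (z ^ 2 + 1)) ^ q)))

lemma rpow_of_sq {w : ℝ} (hw : 0 ≤ w) (e : ℝ) : (w ^ 2) ^ e = w ^ (2 * e) := by
  rw [← Real.rpow_natCast w 2, ← Real.rpow_mul hw]
  norm_num

lemma star {q cx sx cy sy : ℝ} (hq : 2 < q) (hcx : 0 < cx) (hcy : 0 < cy)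
    (hsy : 0 ≤ sy) (hsx : sy ≤ sx) (hc : cx ≤ cy) (h2 : sy * cy ≤ sx * cx) :
    cx ^ (q-3) * sy ^ (q-1) ≤ cy ^ (q-3) * sx ^ (q-1) := by
  have hsx0 : 0 ≤ sx := le_trans hsy hsx
  rcases eq_or_lt_of_le hsy with h0 | hsy'
  · rw [← h0, Real.zero_rpow (ne_of_gt (by linarith)), mul_zero]
    exact mul_nonneg (Real.rpow_nonneg hcy.le _) (Real.rpow_nonneg hsx0 _)
  have hsx' : 0 < sx := lt_of_lt_of_le hsy' hsx
  have hA : (0:ℝ) < sx * cy := by positivity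
  have hB : (0:ℝ) < sy * cx := by positivity
  have hBA : sy * cx ≤ sx * cy := by nlinarith
  have h1 : (sy*cx) ^ (q-2) ≤ (sx*cy) ^ (q-2) :=
    Real.rpow_le_rpow hB.le hBA (by linarith)
  have h2' : sy*cx*cy^2 ≤ sx*cy*cx^2 := by
    nlinarith [mul_le_mul_of_nonneg_right h2 (mul_pos hcx hcy).le]
  have key : (sy*cx) ^ (q-2) * (sy*cx*cy^2) ≤ (sx*cy) ^ (q-2) * (sx*cy*cx^2) :=
    mul_le_mul h1 h2' (by positivity) (by positivity)
  have e1 : ∀ w : ℝ, 0 < w → w ^ (q-2) * w = w ^ (q-1) := by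
    intro w hw
    rw [← Real.rpow_add_one (ne_of_gt hw)]; ring_nf
  have key2 : sy ^ (q-1) * cx ^ (q-1) * cy^2 ≤ sx ^ (q-1) * cy ^ (q-1) * cx^2 := by
    have l := key
    calc sy ^ (q-1) * cx ^ (q-1) * cy^2 = (sy*cx) ^ (q-1) * cy^2 := by
            rw [Real.mul_rpow hsy hcx.le]
      _ = (sy*cx) ^ (q-2) * (sy*cx*cy^2) := by rw [← e1 _ hB]; ring
      _ ≤ (sx*cy) ^ (q-2) * (sx*cy*cx^2) := key
      _ = (sx*cy) ^ (q-1) * cx^2 := by rw [← e1 _ hA]; ring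
      _ = sx ^ (q-1) * cy ^ (q-1) * cx^2 := by rw [Real.mul_rpow hsx0 hcy.le]
  have exp3 : ∀ w : ℝ, 0 < w → w ^ (q-3) = w ^ (q-1) / w^2 := by
    intro w hw
    rw [show q-3 = (q-1) - 2 by ring, Real.rpow_sub hw, ← Real.rpow_natCast w 2]
    norm_num
  rw [exp3 _ hcx, exp3 _ hcy, div_mul_eq_mul_div, div_mul_eq_mul_div,
    div_le_div_iff₀ (by positivity) (by positivity)]
  calc cx ^ (q-1) * sy ^ (q-1) * cy ^ 2 = sy ^ (q-1) * cx ^ (q-1) * cy^2 := by ring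
    _ ≤ sx ^ (q-1) * cy ^ (q-1) * cx^2 := key2
    _ = cy ^ (q-1) * sx ^ (q-1) * cx ^ 2 := by ring

lemma star1 {q cx sx cy sy : ℝ} (hq : 2 < q) (hcx : 0 < cx) (hcy : 0 < cy)
    (hsy : 0 ≤ sy) (hc : cx ≤ cy) (h2 : cx * sy ≤ cy * sx) :
    cx ^ (2*q-3) * sy ≤ cy ^ (2*q-3) * sx := by
  have hsx : 0 ≤ sx := nonneg_of_mul_nonneg_right (le_trans (by positivity) h2) hcy
  have h1 : cx ^ (2*q-4) ≤ cy ^ (2*q-4) := Real.rpow_le_rpow hcx.le hc (by linarith)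
  have e1 : ∀ w : ℝ, 0 < w → w ^ (2*q-4) * w = w ^ (2*q-3) := by
    intro w hw; rw [← Real.rpow_add_one (ne_of_gt hw)]; ring_nf
  calc cx ^ (2*q-3) * sy = cx ^ (2*q-4) * (cx * sy) := by rw [← e1 _ hcx]; ring
    _ ≤ cy ^ (2*q-4) * (cy * sx) :=
        mul_le_mul h1 h2 (by positivity) (Real.rpow_nonneg hcy.le _)
    _ = cy ^ (2*q-3) * sx := by rw [← e1 _ hcy]; ring

lemma point_aux {q c b : ℝ} (hc : 0 < c) (hb : 0 ≤ b) :
    (1/c^2) * (((c^2)⁻¹:ℝ)^(-q) + (b * c)^q)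
      = (c^2)^(q-1) + (c^2)^((q-2)/2) * (b^2)^(q/2) := by
  have hc2 : (0:ℝ) < c^2 := by positivity
  have h1 : ((c^2)⁻¹:ℝ)^(-q) = (c^2)^q := by
    rw [Real.inv_rpow hc2.le, Real.rpow_neg hc2.le, inv_inv]
  have h2 : (b*c)^q = b^q * c^q := Real.mul_rpow hb hc.le
  have h3 : (b^2)^(q/2) = b^q := by rw [rpow_of_sq hb]; ring_nf
  have h4 : (c^2)^((q-2)/2) = c^(q-2) := by rw [rpow_of_sq hc.le]; ring_nf
  have h5 : c^(q-2) * c^2 = c^q := by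
    rw [← Real.rpow_natCast c 2, ← Real.rpow_add hc]; norm_num
  have h6 : (c^2)^(q-1) * c^2 = (c^2)^q := by
    rw [← Real.rpow_add_one (ne_of_gt hc2)]; ring_nf
  rw [h1, h2, h3, h4]
  field_simp
  nlinarith [h5, h6, Real.rpow_nonneg hb q, Real.rpow_nonneg hc2.le (q-1),
    Real.rpow_nonneg hc.le (q-2)]

lemma tan_sq_one {θ : ℝ} (hc : cos θ ≠ 0) : tan θ^2 + 1 = ((cos θ^2)⁻¹:ℝ) := by
  rw [Real.tan_eq_sin_div_cos, div_pow]
  field_simp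
  exact sin_sq_add_cos_sq θ

lemma zint1 {q α : ℝ} (hq : 0 ≤ q) (h0 : 0 < α) (h1 : α ≤ π/2) :
    (∫ z in (-Real.cot α)..(tan (α/2)),
        ((z ^ 2 + 1) ^ (-q) + ((z * sin α + cos α) / (z ^ 2 + 1)) ^ q))
      = ∫ θ in (α-π/2)..(α/2),
          ((cos θ^2)^(q-1) + (cos θ^2)^((q-2)/2) * (cos (α-θ)^2)^(q/2)) := by
  have hπ := pi_pos
  have hab : α - π/2 ≤ α/2 := by linarith
  have huI : uIcc (α-π/2) (α/2) = Icc (α-π/2) (α/2) := uIcc_of_le hab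
  have hcos : ∀ θ ∈ uIcc (α-π/2) (α/2), 0 < cos θ := by
    intro θ hθ
    rw [huI, mem_Icc] at hθ
    exact Real.cos_pos_of_mem_Ioo ⟨by linarith [hθ.1], by linarith [hθ.2]⟩
  have hderiv : ∀ θ ∈ uIcc (α-π/2) (α/2), HasDerivAt tan (1/cos θ^2) θ :=
    fun θ hθ => Real.hasDerivAt_tan (ne_of_gt (hcos θ hθ))
  have hcont : ContinuousOn (fun θ => 1/cos θ^2) (uIcc (α-π/2) (α/2)) := by
    apply ContinuousOn.div continuousOn_const
    · exact (Real.continuous_cos.pow 2).continuousOn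
    · intro θ hθ; exact pow_ne_zero 2 (ne_of_gt (hcos θ hθ))
  have hfc : Continuous (fun z : ℝ =>
      ((z ^ 2 + 1) ^ (-q) + ((z * sin α + cos α) / (z ^ 2 + 1)) ^ q)) := by
    apply Continuous.add
    · apply Continuous.rpow_const (by continuity)
      intro z; left; positivity
    · apply Continuous.rpow_const
      · apply Continuous.div (by continuity) (by continuity)
        intro z; positivity
      · intro z; right; exact hq
  have key := intervalIntegral.integral_comp_smul_deriv hderiv hcont hfc
  have e1 : tan (α - π/2) = -Real.cot α := by
    rw [show α - π/2 = -(π/2 - α) by ring, Real.tan_neg, Real.tan_eq_sin_div_cos,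
      Real.sin_pi_div_two_sub, Real.cos_pi_div_two_sub, Real.cot_eq_cos_div_sin]
  rw [e1] at key
  rw [← key]
  apply intervalIntegral.integral_congr
  intro θ hθ
  have hc := hcos θ hθ
  have hb : 0 ≤ cos (α - θ) := by
    rw [huI, mem_Icc] at hθ
    apply Real.cos_nonneg_of_mem_Icc
    constructor <;> [linarith [hθ.2]; linarith [hθ.1]]
  have hbase : tan θ * sin α + cos α = cos (α - θ) / cos θ := by
    rw [Real.tan_eq_sin_div_cos, Real.cos_sub]
    field_simp; ring
  have := point_aux (q := q) hc hb
  simp only [smul_eq_mul, Function.comp]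
  rw [tan_sq_one (ne_of_gt hc), hbase]
  rw [show cos (α-θ) / cos θ / ((cos θ^2)⁻¹:ℝ) = cos (α-θ) * cos θ by field_simp]
  exact this

lemma zint2 {q α : ℝ} (hq : 0 ≤ q) (h0 : 0 < α) (h1 : α ≤ π/2) :
    (∫ z in (Real.cot α)..(Real.cot (α/2)),
        ((z ^ 2 + 1) ^ (-q) + ((z * sin α - cos α) / (z ^ 2 + 1)) ^ q))
      = ∫ θ in (π/2-α)..(π/2-α/2),
          ((cos θ^2)^(q-1) + (cos θ^2)^((q-2)/2) * (cos (θ+α)^2)^(q/2)) := by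
  have hπ := pi_pos
  have hab : π/2-α ≤ π/2-α/2 := by linarith
  have huI : uIcc (π/2-α) (π/2-α/2) = Icc (π/2-α) (π/2-α/2) := uIcc_of_le hab
  have hcos : ∀ θ ∈ uIcc (π/2-α) (π/2-α/2), 0 < cos θ := by
    intro θ hθ
    rw [huI, mem_Icc] at hθ
    exact Real.cos_pos_of_mem_Ioo ⟨by linarith [hθ.1], by linarith [hθ.2]⟩
  have hderiv : ∀ θ ∈ uIcc (π/2-α) (π/2-α/2), HasDerivAt tan (1/cos θ^2) θ :=
    fun θ hθ => Real.hasDerivAt_tan (ne_of_gt (hcos θ hθ))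
  have hcont : ContinuousOn (fun θ => 1/cos θ^2) (uIcc (π/2-α) (π/2-α/2)) := by
    apply ContinuousOn.div continuousOn_const
    · exact (Real.continuous_cos.pow 2).continuousOn
    · intro θ hθ; exact pow_ne_zero 2 (ne_of_gt (hcos θ hθ))
  have hfc : Continuous (fun z : ℝ =>
      ((z ^ 2 + 1) ^ (-q) + ((z * sin α - cos α) / (z ^ 2 + 1)) ^ q)) := by
    apply Continuous.add
    · apply Continuous.rpow_const (by continuity)
      intro z; left; positivity
    · apply Continuous.rpow_const
      · apply Continuous.div (by continuity) (by continuity)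
        intro z; positivity
      · intro z; right; exact hq
  have key := intervalIntegral.integral_comp_smul_deriv hderiv hcont hfc
  have e1 : tan (π/2 - α) = Real.cot α := by
    rw [Real.tan_eq_sin_div_cos, Real.sin_pi_div_two_sub, Real.cos_pi_div_two_sub,
      Real.cot_eq_cos_div_sin]
  have e2 : tan (π/2 - α/2) = Real.cot (α/2) := by
    rw [Real.tan_eq_sin_div_cos, Real.sin_pi_div_two_sub, Real.cos_pi_div_two_sub,
      Real.cot_eq_cos_div_sin]
  rw [e1, e2] at key
  rw [← key]
  apply intervalIntegral.integral_congr
  intro θ hθ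
  have hc := hcos θ hθ
  have hb : 0 ≤ -cos (θ + α) := by
    rw [huI, mem_Icc] at hθ
    have : cos (θ + α) ≤ 0 := by
      apply Real.cos_nonpos_of_pi_div_two_le_of_le
      · linarith [hθ.1]
      · linarith [hθ.2]
    linarith
  have hbase : tan θ * sin α - cos α = -cos (θ + α) / cos θ := by
    rw [Real.tan_eq_sin_div_cos, Real.cos_add]
    field_simp
    ring
  have := point_aux (q := q) hc hb
  simp only [smul_eq_mul, Function.comp]
  rw [tan_sq_one (ne_of_gt hc), hbase]
  rw [show -cos (θ+α) / cos θ / ((cos θ^2)⁻¹:ℝ) = -cos (θ+α) * cos θ by field_simp]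
  rw [this, neg_pow]
  norm_num

noncomputable def Kf (q d t : ℝ) : ℝ :=
  (cos (t-d/2)^2)^(q-1) + (cos (t-d/2)^2)^((q-2)/2) * (sin (t+d/2)^2)^(q/2)

noncomputable def Wfun (q d t : ℝ) : ℝ :=
  (cos d)^(1-q) * (Kf q d t + Kf q d (-t))

lemma Kf_cont (q d : ℝ) (hq : 2 < q) : Continuous (Kf q d) := by
  unfold Kf
  have h1 : Continuous fun t : ℝ => (cos (t-d/2)^2 : ℝ) := by continuity
  have h2 : Continuous fun t : ℝ => (sin (t+d/2)^2 : ℝ) := by continuity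
  apply Continuous.add
  · exact h1.rpow_const (fun t => Or.inr (by linarith))
  · exact (h1.rpow_const (fun t => Or.inr (by linarith))).mul
      (h2.rpow_const (fun t => Or.inr (by linarith)))

lemma Ffun_eq {q α : ℝ} (hq : 2 < q) (h0 : 0 < α) (h1 : α ≤ π/2) :
    Ffun q α = ∫ t in (0:ℝ)..(π/4), Wfun q (π/2-α) t := by
  have hπ := pi_pos
  set d := π/2 - α with hd
  have hα : α = π/2 - d := by rw [hd]; ring
  have hq0 : (0:ℝ) ≤ q := by linarith
  have hcont : Continuous (Kf q d) := Kf_cont q d hq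
  have hcont' : Continuous (fun t => Kf q d (-t)) := hcont.comp continuous_neg
  -- first integral
  have e1 : (∫ z in (-Real.cot α)..(tan (α / 2)),
        ((z ^ 2 + 1) ^ (-q) + ((z * sin α + cos α) / (z ^ 2 + 1)) ^ q))
      = ∫ t in (-(d/2))..(π/4), Kf q d t := by
    rw [zint1 hq0 h0 h1]
    have sub := intervalIntegral.integral_comp_sub_right
      (a := -(d/2)) (b := π/4)
      (fun θ => ((cos θ^2)^(q-1) + (cos θ^2)^((q-2)/2) * (cos (α-θ)^2)^(q/2))) (d/2)
    have eb1 : -(d/2) - d/2 = α - π/2 := by rw [hα]; ring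
    have eb2 : π/4 - d/2 = α/2 := by rw [hα]; ring
    rw [eb1, eb2] at sub
    rw [← sub]
    apply intervalIntegral.integral_congr
    intro t _
    have earg : α - (t - d/2) = π/2 - (t + d/2) := by rw [hα]; ring
    simp only [Kf, earg, Real.cos_pi_div_two_sub]
  -- second integral
  have e2 : (∫ z in (Real.cot α)..(Real.cot (α/2)),
        ((z ^ 2 + 1) ^ (-q) + ((z * sin α - cos α) / (z ^ 2 + 1)) ^ q))
      = ∫ t in (d/2)..(π/4), Kf q d (-t) := by
    rw [zint2 hq0 h0 h1]
    have sub := intervalIntegral.integral_comp_add_right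
      (a := d/2) (b := π/4)
      (fun θ => ((cos θ^2)^(q-1) + (cos θ^2)^((q-2)/2) * (cos (θ+α)^2)^(q/2))) (d/2)
    have eb1 : d/2 + d/2 = π/2 - α := by rw [hα]; ring
    have eb2 : π/4 + d/2 = π/2 - α/2 := by rw [hα]; ring
    rw [eb1, eb2] at sub
    rw [← sub]
    apply intervalIntegral.integral_congr
    intro t _
    have earg : t + d/2 + α = π/2 + (t - d/2) := by rw [hα]; ring
    have ecos : cos (t + d/2 + α) ^ 2 = sin (t - d/2) ^ 2 := by
      rw [earg, show π/2 + (t - d/2) = (t-d/2) + π/2 by ring, Real.cos_add_pi_div_two]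
      rw [neg_sq]
    have e3 : cos (-t - d/2) = cos (t + d/2) := by
      rw [show -t - d/2 = -(t+d/2) by ring, Real.cos_neg]
    have e4 : sin (-t + d/2) ^ 2 = sin (t - d/2) ^ 2 := by
      rw [show -t + d/2 = -(t-d/2) by ring, Real.sin_neg, neg_sq]
    simp only [Kf, ecos, e3, e4]
  -- splitting and folding
  have i1 : IntervalIntegrable (Kf q d) volume (-(d/2)) 0 := hcont.intervalIntegrable _ _
  have i2 : IntervalIntegrable (Kf q d) volume 0 (π/4) := hcont.intervalIntegrable _ _
  have i3 : IntervalIntegrable (fun t => Kf q d (-t)) volume 0 (d/2) := hcont'.intervalIntegrable _ _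
  have i4 : IntervalIntegrable (fun t => Kf q d (-t)) volume (d/2) (π/4) := hcont'.intervalIntegrable _ _
  have split1 : (∫ t in (-(d/2))..(π/4), Kf q d t)
      = (∫ t in (-(d/2))..(0:ℝ), Kf q d t) + ∫ t in (0:ℝ)..(π/4), Kf q d t :=
    (intervalIntegral.integral_add_adjacent_intervals i1 i2).symm
  have fold : (∫ t in (-(d/2))..(0:ℝ), Kf q d t) = ∫ t in (0:ℝ)..(d/2), Kf q d (-t) := by
    have := intervalIntegral.integral_comp_neg (a := (0:ℝ)) (b := d/2) (Kf q d)
    rw [this, neg_zero]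
  have join2 : (∫ t in (0:ℝ)..(d/2), Kf q d (-t)) + (∫ t in (d/2)..(π/4), Kf q d (-t))
      = ∫ t in (0:ℝ)..(π/4), Kf q d (-t) :=
    intervalIntegral.integral_add_adjacent_intervals i3 i4
  have esin : sin α = cos d := by rw [hα, Real.sin_pi_div_two_sub]
  rw [Ffun, e1, e2, esin, split1, fold]
  rw [show (∫ t in (0:ℝ)..(d/2), Kf q d (-t)) + (∫ t in (0:ℝ)..(π/4), Kf q d t)
        + (∫ t in (d/2)..(π/4), Kf q d (-t))
      = (∫ t in (0:ℝ)..(π/4), Kf q d t)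
        + ((∫ t in (0:ℝ)..(d/2), Kf q d (-t)) + (∫ t in (d/2)..(π/4), Kf q d (-t))) by ring,
    join2]
  rw [← intervalIntegral.integral_add (hcont.intervalIntegrable _ _) (hcont'.intervalIntegrable _ _)]
  rw [← intervalIntegral.integral_const_mul]
  rfl

lemma rpow_shift {w : ℝ} (hw : w ≠ 0) (e f : ℝ) (h : f = e + 1) : w ^ f = w ^ e * w := by
  rw [h, Real.rpow_add_one hw]

lemma rpow_shift' {w : ℝ} (hw : 0 ≤ w) (e f : ℝ) (h : f = e + 1) (he : e ≠ 0) (hf : f ≠ 0) :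
    w ^ f = w ^ e * w := by
  rcases eq_or_lt_of_le hw with h0 | h0
  · rw [← h0, Real.zero_rpow he, Real.zero_rpow hf, zero_mul]
  · exact rpow_shift (ne_of_gt h0) e f h

lemma sign1core {q cd sd cx sx cy sy : ℝ} (hq : 2 < q) (hcd : 0 < cd) (hsd : 0 ≤ sd)
    (hcx : 0 < cx) (hsx : 0 ≤ sx) (hcy : 0 < cy) (hxy : cx ≤ cy)
    (hA : sx = sd*cy + cd*sy) (hB : sy = sx*cd - cx*sd) (hC : sd = sx*cy - cx*sy) :
    0 ≤ sd*(q-1)*((cy^2)^(q-1) + (cx^2)^(q-1))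
      + cd*(q-1)*((cy*sy)*(cy^2)^(q-1-1) - (cx*sx)*(cx^2)^(q-1-1)) := by
  have e1 : ((cy:ℝ)^2)^(q-1) = cy^(2*q-2) := by rw [rpow_of_sq hcy.le]; ring_nf
  have e2 : ((cx:ℝ)^2)^(q-1) = cx^(2*q-2) := by rw [rpow_of_sq hcx.le]; ring_nf
  have e3 : ((cy:ℝ)^2)^(q-1-1) = cy^(2*q-4) := by rw [rpow_of_sq hcy.le]; ring_nf
  have e4 : ((cx:ℝ)^2)^(q-1-1) = cx^(2*q-4) := by rw [rpow_of_sq hcx.le]; ring_nf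
  have h1 : cy^(2*q-2) = cy^(2*q-4)*cy*cy := by
    rw [rpow_shift (ne_of_gt hcy) (2*q-3) _ (by ring),
        rpow_shift (ne_of_gt hcy) (2*q-4) _ (by ring)]
  have h2 : cx^(2*q-2) = cx^(2*q-4)*cx*cx := by
    rw [rpow_shift (ne_of_gt hcx) (2*q-3) _ (by ring),
        rpow_shift (ne_of_gt hcx) (2*q-4) _ (by ring)]
  have h3 : cy^(2*q-3) = cy^(2*q-4)*cy := rpow_shift (ne_of_gt hcy) _ _ (by ring)
  have h4 : cx^(2*q-3) = cx^(2*q-4)*cx := rpow_shift (ne_of_gt hcx) _ _ (by ring)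
  have key : sd*(q-1)*(cy^(2*q-2) + cx^(2*q-2))
      + cd*(q-1)*((cy*sy)*cy^(2*q-4) - (cx*sx)*cx^(2*q-4))
      = (q-1)*(cy^(2*q-3)*sx - cx^(2*q-3)*sy) := by
    rw [h1, h2, h3, h4]
    linear_combination (-((q-1)*cy^(2*q-4)*cy))*hA + ((q-1)*cx^(2*q-4)*cx)*hB
  rw [e1, e2, e3, e4, key]
  have hq1 : (0:ℝ) ≤ q - 1 := by linarith
  rcases le_or_gt sy 0 with hsy | hsy
  · have t1 : 0 ≤ cy^(2*q-3)*sx := mul_nonneg (Real.rpow_nonneg hcy.le _) hsx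
    have t2 : cx^(2*q-3)*sy ≤ 0 :=
      mul_nonpos_of_nonneg_of_nonpos (Real.rpow_nonneg hcx.le _) hsy
    nlinarith
  · have hs : cx * sy ≤ cy * sx := by nlinarith
    have := star1 hq hcx hcy hsy.le hxy hs
    nlinarith

lemma sign2core {q cd sd cx sx cy sy : ℝ} (hq : 2 < q) (hcd : 0 < cd) (hsd : 0 < sd)
    (hcx : 0 < cx) (hsx : 0 < sx) (hcy : 0 < cy)
    (hxy : cx ≤ cy) (hsy2 : sy ≤ sx) (h22 : sy*cy ≤ sx*cx)
    (hA : sx = sd*cy + cd*sy) (hI : -sy = sd*cx - cd*sx) :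
    0 < sd*(q-1)*((cy^2)^((q-2)/2)*(sx^2)^(q/2) + (cx^2)^((q-2)/2)*(sy^2)^(q/2))
      + cd*((cy*sy)*((q-2)/2)*(cy^2)^((q-2)/2-1)*(sx^2)^(q/2)
          + (cy^2)^((q-2)/2)*((sx*cx)*(q/2)*(sx^2)^(q/2-1))
          - (cx*sx)*((q-2)/2)*(cx^2)^((q-2)/2-1)*(sy^2)^(q/2)
          - (cx^2)^((q-2)/2)*((sy*cy)*(q/2)*(sy^2)^(q/2-1))) := by
  have e1 : ((cy:ℝ)^2)^((q-2)/2) = cy^(q-2) := by rw [rpow_of_sq hcy.le]; ring_nf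
  have e2 : ((cx:ℝ)^2)^((q-2)/2) = cx^(q-2) := by rw [rpow_of_sq hcx.le]; ring_nf
  have e3 : ((cy:ℝ)^2)^((q-2)/2-1) = cy^(q-4) := by rw [rpow_of_sq hcy.le]; ring_nf
  have e4 : ((cx:ℝ)^2)^((q-2)/2-1) = cx^(q-4) := by rw [rpow_of_sq hcx.le]; ring_nf
  have e5 : ((sx:ℝ)^2)^(q/2) = sx^q := by rw [rpow_of_sq hsx.le]; ring_nf
  have e6 : ((sx:ℝ)^2)^(q/2-1) = sx^(q-2) := by rw [rpow_of_sq hsx.le]; ring_nf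
  rw [e1, e2, e3, e4, e5, e6]
  have lcy2 : cy^(q-2) = cy^(q-4)*cy*cy := by
    rw [rpow_shift (ne_of_gt hcy) (q-3) _ (by ring),
        rpow_shift (ne_of_gt hcy) (q-4) _ (by ring)]
  have lcx2 : cx^(q-2) = cx^(q-4)*cx*cx := by
    rw [rpow_shift (ne_of_gt hcx) (q-3) _ (by ring),
        rpow_shift (ne_of_gt hcx) (q-4) _ (by ring)]
  have lsxq : sx^q = sx^(q-2)*sx*sx := by
    rw [rpow_shift (ne_of_gt hsx) (q-1) _ (by ring),
        rpow_shift (ne_of_gt hsx) (q-2) _ (by ring)]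
  rcases le_or_gt 0 sy with hsy | hsy
  · -- case sy ≥ 0
    have e7 : ((sy:ℝ)^2)^(q/2) = sy^q := by rw [rpow_of_sq hsy]; ring_nf
    have e8 : ((sy:ℝ)^2)^(q/2-1) = sy^(q-2) := by rw [rpow_of_sq hsy]; ring_nf
    rw [e7, e8]
    have hstar := star hq hcx hcy hsy hsy2 hxy h22
    have lsyq : sy^q = sy^(q-2)*sy*sy := by
      rw [rpow_shift' hsy (q-1) _ (by ring) (by linarith) (by linarith),
          rpow_shift' hsy (q-2) _ (by ring) (by linarith) (by linarith)]
    have lsy1 : sy^(q-1) = sy^(q-2)*sy :=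
      rpow_shift' hsy _ _ (by ring) (by linarith) (by linarith)
    have lcy3 : cy^(q-3) = cy^(q-4)*cy := rpow_shift (ne_of_gt hcy) _ _ (by ring)
    have lcx3 : cx^(q-3) = cx^(q-4)*cx := rpow_shift (ne_of_gt hcx) _ _ (by ring)
    have lsx1 : sx^(q-1) = sx^(q-2)*sx := rpow_shift (ne_of_gt hsx) _ _ (by ring)
    rw [lcy3, lcx3, lsx1, lsy1] at hstar
    rw [lcy2, lcx2, lsxq, lsyq]
    have hq2 : (0:ℝ) ≤ (q-2)/2 := by linarith
    have c1 : 0 ≤ cd*(((q-2)/2)*sy*sx + (q/2)*cx*cy)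
        * ((cy^(q-4)*cy)*(sx^(q-2)*sx) - (cx^(q-4)*cx)*(sy^(q-2)*sy)) := by
      apply mul_nonneg (mul_nonneg hcd.le ?_) (by linarith)
      have w1 : 0 ≤ ((q-2)/2)*sy*sx := mul_nonneg (mul_nonneg hq2 hsy) hsx.le
      have w2 : 0 < (q/2)*cx*cy := by positivity
      linarith
    have c2 : 0 < sd*(q-1)*(cy^(q-4)*cy*cy*(sx^(q-2)*sx*sx)) :=
      mul_pos (mul_pos hsd (by linarith)) (by positivity)
    have c3 : 0 ≤ sd*(q-1)*(cx^(q-4)*cx*cx*(sy^(q-2)*sy*sy)) := by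
      apply mul_nonneg (mul_nonneg hsd.le (by linarith))
      apply mul_nonneg (by positivity)
      exact mul_nonneg (mul_nonneg (Real.rpow_nonneg hsy _) hsy) hsy
    linarith [c1, c2, c3]
  · -- case sy < 0
    obtain ⟨u, hu0, hsyu⟩ : ∃ u, 0 < u ∧ sy = -u := ⟨-sy, by linarith, by ring⟩
    subst hsyu
    have e7 : (((-u:ℝ))^2)^(q/2) = u^q := by
      rw [show ((-u:ℝ))^2 = u^2 by ring, rpow_of_sq hu0.le]; ring_nf
    have e8 : (((-u:ℝ))^2)^(q/2-1) = u^(q-2) := by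
      rw [show ((-u:ℝ))^2 = u^2 by ring, rpow_of_sq hu0.le]; ring_nf
    rw [e7, e8]
    have b1 : cd*u ≤ sd*cy := by nlinarith [hA, hsx.le]
    have b2 : cd*sx ≤ sd*cx := by nlinarith [hI]
    have c2 : 0 < cd*(cy^(q-4)*cy*cy*((sx*cx)*(q/2)*sx^(q-2))) := by positivity
    have c4 : 0 ≤ cd*(cx^(q-4)*cx*cx*((u*cy)*(q/2)*u^(q-2))) := by positivity
    have hswap : ((q-2)/2 : ℝ) ≤ q - 1 := by linarith
    have k1 : cd*(cy*u*((q-2)/2)*cy^(q-4)*sx^q) ≤ sd*(q-1)*(cy^(q-4)*cy*cy*sx^q) := by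
      have m1 := mul_le_mul_of_nonneg_right b1 (show (0:ℝ) ≤ (q-2)/2 by linarith)
      have m2 : sd*cy*((q-2)/2) ≤ sd*cy*(q-1) :=
        mul_le_mul_of_nonneg_left hswap (by positivity)
      have h' : cd*u*((q-2)/2) ≤ sd*cy*(q-1) := by linarith
      have hpos : (0:ℝ) ≤ cy^(q-4)*cy*sx^q := by positivity
      have := mul_le_mul_of_nonneg_right h' hpos
      linarith [this]
    have k2 : cd*(cx*sx*((q-2)/2)*cx^(q-4)*u^q) ≤ sd*(q-1)*(cx^(q-4)*cx*cx*u^q) := by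
      have m1 := mul_le_mul_of_nonneg_right b2 (show (0:ℝ) ≤ (q-2)/2 by linarith)
      have m2 : sd*cx*((q-2)/2) ≤ sd*cx*(q-1) :=
        mul_le_mul_of_nonneg_left hswap (by positivity)
      have h' : cd*sx*((q-2)/2) ≤ sd*cx*(q-1) := by linarith
      have hpos : (0:ℝ) ≤ cx^(q-4)*cx*u^q := by positivity
      have := mul_le_mul_of_nonneg_right h' hpos
      linarith [this]
    rw [lcy2, lcx2]
    linarith [k1, k2, c2, c4]

lemma hd_cos_sub (t d : ℝ) : HasDerivAt (fun d : ℝ => cos (t - d/2)) (sin (t - d/2) / 2) d := by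
  have h := (Real.hasDerivAt_cos (t - d/2)).comp d (((hasDerivAt_id d).div_const 2).const_sub t)
  exact h.congr_deriv (by ring)

lemma hd_cos_add (t d : ℝ) : HasDerivAt (fun d : ℝ => cos (t + d/2)) (-(sin (t + d/2)) / 2) d := by
  have h := (Real.hasDerivAt_cos (t + d/2)).comp d (((hasDerivAt_id d).div_const 2).const_add t)
  exact h.congr_deriv (by ring)

lemma hd_sin_sub (t d : ℝ) : HasDerivAt (fun d : ℝ => sin (t - d/2)) (-(cos (t - d/2)) / 2) d := by
  have h := (Real.hasDerivAt_sin (t - d/2)).comp d (((hasDerivAt_id d).div_const 2).const_sub t)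
  exact h.congr_deriv (by ring)

lemma hd_sin_add (t d : ℝ) : HasDerivAt (fun d : ℝ => sin (t + d/2)) (cos (t + d/2) / 2) d := by
  have h := (Real.hasDerivAt_sin (t + d/2)).comp d (((hasDerivAt_id d).div_const 2).const_add t)
  exact h.congr_deriv (by ring)

section facts
variable {t d : ℝ}

lemma fact_cd (hd0 : 0 < d) (hd1 : d < π/2) : 0 < cos d := Real.cos_pos_of_mem_Ioo ⟨by linarith [pi_pos], hd1⟩
lemma fact_sd (hd0 : 0 < d) (hd1 : d < π/2) : 0 < sin d := Real.sin_pos_of_pos_of_lt_pi hd0 (by linarith [pi_pos])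
lemma fact_cx (ht0 : 0 ≤ t) (hd0 : 0 < d) (hd1 : d < π/2) (ht1 : t ≤ π/4) : 0 < cos (t + d/2) :=
  Real.cos_pos_of_mem_Ioo ⟨by linarith [pi_pos], by linarith⟩
lemma fact_sx (ht0 : 0 ≤ t) (hd0 : 0 < d) (hd1 : d < π/2) (ht1 : t ≤ π/4) : 0 < sin (t + d/2) :=
  Real.sin_pos_of_pos_of_lt_pi (by linarith) (by linarith [pi_pos])
lemma fact_cy (ht0 : 0 ≤ t) (hd0 : 0 < d) (hd1 : d < π/2) (ht1 : t ≤ π/4) : 0 < cos (t - d/2) :=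
  Real.cos_pos_of_mem_Ioo ⟨by linarith, by linarith [pi_pos]⟩
lemma fact_xy (ht0 : 0 ≤ t) (hd0 : 0 < d) (hd1 : d < π/2) (ht1 : t ≤ π/4) : cos (t + d/2) ≤ cos (t - d/2) := by
  rw [← Real.cos_abs (t - d/2)]
  apply Real.cos_le_cos_of_nonneg_of_le_pi (abs_nonneg _) (by linarith [pi_pos])
  rcases abs_cases (t - d/2) with ⟨h, _⟩ | ⟨h, _⟩ <;> rw [h] <;> linarith
lemma fact_sy2 (ht0 : 0 ≤ t) (hd0 : 0 < d) (hd1 : d < π/2) (ht1 : t ≤ π/4) : sin (t - d/2) ≤ sin (t + d/2) := by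
  have h := Real.sin_sub_sin (t + d/2) (t - d/2)
  have e1 : (t + d/2 - (t - d/2))/2 = d/2 := by ring
  have e2 : (t + d/2 + (t - d/2))/2 = t := by ring
  rw [e1, e2] at h
  have h1 : 0 ≤ sin (d/2) := Real.sin_nonneg_of_nonneg_of_le_pi (by linarith) (by linarith [pi_pos])
  have h2 : 0 ≤ cos t := Real.cos_nonneg_of_mem_Icc ⟨by linarith [pi_pos], by linarith [pi_pos]⟩
  nlinarith
lemma fact_22 (ht0 : 0 ≤ t) (hd0 : 0 < d) (hd1 : d < π/2) (ht1 : t ≤ π/4) : sin (t - d/2) * cos (t - d/2) ≤ sin (t + d/2) * cos (t + d/2) := by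
  have h := Real.sin_sub_sin (2*(t + d/2)) (2*(t - d/2))
  have e1 : (2*(t + d/2) - 2*(t - d/2))/2 = d := by ring
  have e2 : (2*(t + d/2) + 2*(t - d/2))/2 = 2*t := by ring
  rw [e1, e2, Real.sin_two_mul, Real.sin_two_mul] at h
  have h1 : 0 ≤ sin d := (fact_sd hd0 hd1).le
  have h2 : 0 ≤ cos (2*t) := Real.cos_nonneg_of_mem_Icc ⟨by linarith [pi_pos], by linarith⟩
  nlinarith
lemma fact_A : sin (t + d/2) = sin d * cos (t - d/2) + cos d * sin (t - d/2) := by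
  have h := Real.sin_add d (t - d/2)
  rw [show d + (t - d/2) = t + d/2 by ring] at h
  exact h
lemma fact_B : sin (t - d/2) = sin (t + d/2) * cos d - cos (t + d/2) * sin d := by
  have h := Real.sin_sub (t + d/2) d
  rw [show t + d/2 - d = t - d/2 by ring] at h
  exact h
lemma fact_C : sin d = sin (t + d/2) * cos (t - d/2) - cos (t + d/2) * sin (t - d/2) := by
  have h := Real.sin_sub (t + d/2) (t - d/2)
  rw [show t + d/2 - (t - d/2) = d by ring] at h
  exact h
lemma fact_I : -sin (t - d/2) = sin d * cos (t + d/2) - cos d * sin (t + d/2) := by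
  have h := Real.sin_sub d (t + d/2)
  rw [show d - (t + d/2) = -(t - d/2) by ring, Real.sin_neg] at h
  exact h
end facts

lemma W2_mono {q t : ℝ} (hq : 2 < q) (ht0 : 0 ≤ t) (ht1 : t ≤ π/4) :
    StrictMonoOn (fun d => (cos d)^(1-q) *
      ((cos (t-d/2)^2)^((q-2)/2) * (sin (t+d/2)^2)^(q/2)
        + (cos (t+d/2)^2)^((q-2)/2) * (sin (t-d/2)^2)^(q/2))) (Ico 0 (π/2)) := by
  apply strictMonoOn_of_deriv_pos (convex_Ico 0 (π/2))
  · -- continuity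
    intro d hd
    apply ContinuousAt.continuousWithinAt
    have hcd : cos d ≠ 0 := by
      have : 0 < cos d := Real.cos_pos_of_mem_Ioo ⟨by linarith [pi_pos, hd.1], hd.2⟩
      linarith
    apply ContinuousAt.mul
    · exact (Real.continuousAt_rpow_const _ _ (Or.inl hcd)).comp Real.continuous_cos.continuousAt
    · apply Continuous.continuousAt
      apply Continuous.add
      · exact (((Real.continuous_cos.comp (by continuity)).pow 2).rpow_const
            (fun _ => Or.inr (by linarith))).mul
          (((Real.continuous_sin.comp (by continuity)).pow 2).rpow_const
            (fun _ => Or.inr (by linarith)))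
      · exact (((Real.continuous_cos.comp (by continuity)).pow 2).rpow_const
            (fun _ => Or.inr (by linarith))).mul
          (((Real.continuous_sin.comp (by continuity)).pow 2).rpow_const
            (fun _ => Or.inr (by linarith)))
  · intro d hd
    rw [interior_Ico] at hd
    obtain ⟨hd0, hd1⟩ := hd
    have hcd := fact_cd hd0 hd1
    have hsd := fact_sd hd0 hd1
    have hcx := fact_cx ht0 hd0 hd1 ht1
    have hsx := fact_sx ht0 hd0 hd1 ht1
    have hcy := fact_cy ht0 hd0 hd1 ht1
    have hAy : HasDerivAt (fun d => ((cos (t-d/2))^2)^((q-2)/2))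
        ((2 * cos (t-d/2) ^ 1 * (sin (t-d/2)/2)) * ((q-2)/2) * ((cos (t-d/2))^2)^((q-2)/2-1)) d :=
      HasDerivAt.rpow_const ((hd_cos_sub t d).pow 2) (Or.inl (by positivity))
    have hBx : HasDerivAt (fun d => ((sin (t+d/2))^2)^(q/2))
        ((2 * sin (t+d/2) ^ 1 * (cos (t+d/2)/2)) * (q/2) * ((sin (t+d/2))^2)^(q/2-1)) d :=
      HasDerivAt.rpow_const ((hd_sin_add t d).pow 2) (Or.inr (by linarith))
    have hAx : HasDerivAt (fun d => ((cos (t+d/2))^2)^((q-2)/2))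
        ((2 * cos (t+d/2) ^ 1 * (-(sin (t+d/2))/2)) * ((q-2)/2) * ((cos (t+d/2))^2)^((q-2)/2-1)) d :=
      HasDerivAt.rpow_const ((hd_cos_add t d).pow 2) (Or.inl (by positivity))
    have hBy : HasDerivAt (fun d => ((sin (t-d/2))^2)^(q/2))
        ((2 * sin (t-d/2) ^ 1 * (-(cos (t-d/2))/2)) * (q/2) * ((sin (t-d/2))^2)^(q/2-1)) d :=
      HasDerivAt.rpow_const ((hd_sin_sub t d).pow 2) (Or.inr (by linarith))
    have hout : HasDerivAt (fun d => (cos d)^(1-q))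
        ((-sin d) * (1-q) * (cos d)^(1-q-1)) d :=
      HasDerivAt.rpow_const (Real.hasDerivAt_cos d) (Or.inl (ne_of_gt hcd))
    have hW := hout.mul ((hAy.mul hBx).add (hAx.mul hBy))
    have hW' := hW.deriv
    simp only [Pi.mul_def, Pi.add_def] at hW'
    rw [hW']
    have hE := sign2core hq hcd hsd hcx hsx hcy (fact_xy ht0 hd0 hd1 ht1)
      (fact_sy2 ht0 hd0 hd1 ht1) (fact_22 ht0 hd0 hd1 ht1) (fact_A (t:=t) (d:=d)) (fact_I (t:=t) (d:=d))
    have hkey := mul_pos (Real.rpow_pos_of_pos hcd (1-q-1)) hE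
    have hsplit : (cos d)^(1-q) = (cos d)^(1-q-1) * cos d :=
      rpow_shift (ne_of_gt hcd) _ _ (by ring)
    rw [hsplit]
    nlinarith [hkey]

lemma W1_mono {q t : ℝ} (hq : 2 < q) (ht0 : 0 ≤ t) (ht1 : t ≤ π/4) :
    MonotoneOn (fun d => (cos d)^(1-q) *
      ((cos (t-d/2)^2)^(q-1) + (cos (t+d/2)^2)^(q-1))) (Ico 0 (π/2)) := by
  have hderiv : ∀ d, 0 < d → d < π/2 → HasDerivAt (fun d => (cos d)^(1-q) *
      ((cos (t-d/2)^2)^(q-1) + (cos (t+d/2)^2)^(q-1)))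
      ((-sin d) * (1-q) * (cos d)^(1-q-1) * ((cos (t-d/2)^2)^(q-1) + (cos (t+d/2)^2)^(q-1))
        + (cos d)^(1-q) * ((2 * cos (t-d/2) ^ 1 * (sin (t-d/2)/2)) * (q-1) * ((cos (t-d/2))^2)^(q-1-1)
          + (2 * cos (t+d/2) ^ 1 * (-(sin (t+d/2))/2)) * (q-1) * ((cos (t+d/2))^2)^(q-1-1))) d := by
    intro d hd0 hd1
    have hcd := fact_cd hd0 hd1
    have hPy : HasDerivAt (fun d => ((cos (t-d/2))^2)^(q-1))
        ((2 * cos (t-d/2) ^ 1 * (sin (t-d/2)/2)) * (q-1) * ((cos (t-d/2))^2)^(q-1-1)) d :=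
      HasDerivAt.rpow_const ((hd_cos_sub t d).pow 2) (Or.inr (by linarith))
    have hPx : HasDerivAt (fun d => ((cos (t+d/2))^2)^(q-1))
        ((2 * cos (t+d/2) ^ 1 * (-(sin (t+d/2))/2)) * (q-1) * ((cos (t+d/2))^2)^(q-1-1)) d :=
      HasDerivAt.rpow_const ((hd_cos_add t d).pow 2) (Or.inr (by linarith))
    have hout : HasDerivAt (fun d => (cos d)^(1-q))
        ((-sin d) * (1-q) * (cos d)^(1-q-1)) d :=
      HasDerivAt.rpow_const (Real.hasDerivAt_cos d) (Or.inl (ne_of_gt hcd))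
    exact hout.mul (hPy.add hPx)
  apply monotoneOn_of_deriv_nonneg (convex_Ico 0 (π/2))
  · -- continuity
    intro d hd
    apply ContinuousAt.continuousWithinAt
    have hcd : cos d ≠ 0 := by
      have : 0 < cos d := Real.cos_pos_of_mem_Ioo ⟨by linarith [pi_pos, hd.1], hd.2⟩
      linarith
    apply ContinuousAt.mul
    · exact (Real.continuousAt_rpow_const _ _ (Or.inl hcd)).comp Real.continuous_cos.continuousAt
    · apply Continuous.continuousAt
      exact (((Real.continuous_cos.comp (by continuity)).pow 2).rpow_const
            (fun _ => Or.inr (by linarith))).add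
          (((Real.continuous_cos.comp (by continuity)).pow 2).rpow_const
            (fun _ => Or.inr (by linarith)))
  · -- differentiability on interior
    intro d hd
    rw [interior_Ico] at hd
    exact ((hderiv d hd.1 hd.2).differentiableAt).differentiableWithinAt
  · intro d hd
    rw [interior_Ico] at hd
    obtain ⟨hd0, hd1⟩ := hd
    have hcd := fact_cd hd0 hd1
    have hsd := fact_sd hd0 hd1
    have hcx := fact_cx ht0 hd0 hd1 ht1
    have hsx := fact_sx ht0 hd0 hd1 ht1
    have hcy := fact_cy ht0 hd0 hd1 ht1
    rw [(hderiv d hd0 hd1).deriv]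
    have hE := sign1core hq hcd hsd.le hcx hsx.le hcy (fact_xy ht0 hd0 hd1 ht1)
      (fact_A (t:=t) (d:=d)) (fact_B (t:=t) (d:=d)) (fact_C (t:=t) (d:=d))
    have hkey := mul_nonneg (Real.rpow_pos_of_pos hcd (1-q-1)).le hE
    have hsplit : (cos d)^(1-q) = (cos d)^(1-q-1) * cos d :=
      rpow_shift (ne_of_gt hcd) _ _ (by ring)
    rw [hsplit]
    nlinarith [hkey]

lemma Wfun_decomp (q d t : ℝ) : Wfun q d t
    = (cos d)^(1-q) * ((cos (t-d/2)^2)^(q-1) + (cos (t+d/2)^2)^(q-1))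
      + (cos d)^(1-q) * ((cos (t-d/2)^2)^((q-2)/2) * (sin (t+d/2)^2)^(q/2)
          + (cos (t+d/2)^2)^((q-2)/2) * (sin (t-d/2)^2)^(q/2)) := by
  simp only [Wfun, Kf]
  rw [show (-t - d/2 : ℝ) = -(t+d/2) by ring, show (-t + d/2 : ℝ) = -(t-d/2) by ring,
    Real.cos_neg, Real.sin_neg, neg_sq]
  ring

lemma Wfun_strict {q t : ℝ} (hq : 2 < q) (ht0 : 0 ≤ t) (ht1 : t ≤ π/4)
    {d1 d2 : ℝ} (h1 : d1 ∈ Ico 0 (π/2)) (h2 : d2 ∈ Ico 0 (π/2)) (h12 : d1 < d2) :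
    Wfun q d1 t < Wfun q d2 t := by
  rw [Wfun_decomp, Wfun_decomp]
  exact add_lt_add_of_le_of_lt (W1_mono hq ht0 ht1 h1 h2 h12.le)
    (W2_mono hq ht0 ht1 h1 h2 h12)

lemma Wfun_contin (q d : ℝ) (hq : 2 < q) : Continuous (fun t => Wfun q d t) := by
  unfold Wfun
  exact continuous_const.mul ((Kf_cont q d hq).add ((Kf_cont q d hq).comp continuous_neg))

/-- For `q > 2` the angle function `F` is strictly decreasing on `(0, π/2]` and attains its
global minimum at the right angle `α = π/2`. -/
theorem stmt14 (q : ℝ) (hq : 2 < q) :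
    StrictAntiOn (Ffun q) (Ioc 0 (π / 2)) ∧
    ∀ α ∈ Ioc 0 (π / 2), Ffun q (π / 2) ≤ Ffun q α := by
  have hπ := pi_pos
  have hanti : StrictAntiOn (Ffun q) (Ioc 0 (π / 2)) := by
    intro a ha b hb hab
    obtain ⟨ha0, ha1⟩ := ha
    obtain ⟨hb0, hb1⟩ := hb
    rw [Ffun_eq hq ha0 ha1, Ffun_eq hq hb0 hb1]
    have hmem1 : (π/2 - b) ∈ Ico 0 (π/2) := ⟨by linarith, by linarith⟩
    have hmem2 : (π/2 - a) ∈ Ico 0 (π/2) := ⟨by linarith, by linarith⟩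
    have hint1 : IntervalIntegrable (fun t => Wfun q (π/2 - a) t) volume 0 (π/4) :=
      (Wfun_contin q _ hq).intervalIntegrable _ _
    have hint2 : IntervalIntegrable (fun t => Wfun q (π/2 - b) t) volume 0 (π/4) :=
      (Wfun_contin q _ hq).intervalIntegrable _ _
    have hpos : 0 < ∫ t in (0:ℝ)..(π/4), (Wfun q (π/2 - a) t - Wfun q (π/2 - b) t) := by
      apply intervalIntegral.intervalIntegral_pos_of_pos_on (hint1.sub hint2)
      · intro t ht
        have := Wfun_strict hq (le_of_lt ht.1) (le_of_lt ht.2) hmem1 hmem2 (by linarith)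
        linarith
      · linarith
    rw [intervalIntegral.integral_sub hint1 hint2] at hpos
    linarith
  refine ⟨hanti, fun α hα => ?_⟩
  rcases eq_or_lt_of_le hα.2 with h | h
  · rw [h]
  · exact le_of_lt (hanti hα ⟨by linarith, le_refl _⟩ h)
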